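/- The cooperation threshold θ¹(l) = (c^f − BR/(k·l))/(r/l − c^v) is strictly increasing in l on the interval where 1 ≤ l < r/c^v and c^f·c^v·k·l² terms make the derivative positive; specifically, if BR, c^f, r, c^v, k > 0, c^f > BR/(k·l) and r/l > c^v for all l in the range considered, then θ¹(l+1) > θ¹(l). Hence larger committees of cooperators require more transactions to sustain cooperation. -/

import Mathlib

/-- The cooperation threshold `θ¹(l) = (c^f − BR/(k·l))/(r/l − c^v)` is
strictly increasing in the number of cooperators `l`: `θ¹(l+1) > θ¹(l)`.
Larger groups of cooperators require more transactions to sustain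
cooperation. -/
theorem theta1_increasing_in_l
    (BR cf r cv k l : ℝ)
    (hk : 1 ≤ k) (hl : 1 ≤ l)
    (hBR : 0 < BR) (hcf : 0 < cf) (hr : 0 < r) (hcv : 0 < cv)
    (hden : cv < r / (l + 1))
    (hnum : BR / (k * l) < cf) :
    (cf - BR / (k * (l + 1))) / (r / (l + 1) - cv)
      > (cf - BR / (k * l)) / (r / l - cv) := by
  have hl0 : (0:ℝ) < l := lt_of_lt_of_le one_pos hl
  have hk0 : (0:ℝ) < k := lt_of_lt_of_le one_pos hk
  have hl1 : (0:ℝ) < l + 1 := by linarith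
  have hd1 : 0 < r / (l + 1) - cv := by linarith
  have hdlt : r / (l + 1) < r / l := by
    apply div_lt_div_of_pos_left hr hl0; linarith
  have hd2 : r / (l + 1) - cv < r / l - cv := by linarith
  have hn1 : 0 < cf - BR / (k * l) := by linarith
  have hnlt : BR / (k * (l + 1)) < BR / (k * l) := by
    apply div_lt_div_of_pos_left hBR (by positivity)
    nlinarith
  have hn2 : cf - BR / (k * l) < cf - BR / (k * (l + 1)) := by linarith
  exact div_lt_div₀ hn2 hd2.le (by linarith) hd1
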